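/- Let D ⊆ ℝⁿ be a finite set with |D| = ν and let f : D → ℝ be an arbitrary function. Then for every m ≥ ν(n+1) there exist w_1,…,w_m ∈ ℝⁿ, b_1,…,b_m ∈ ℝ and α_1,…,α_m ∈ ℝ such that Σ_{j=1}^m α_j σ(w_jᵀx + b_j) = f(x) for all x ∈ D. -/

import Mathlib

open Matrix

/-- Dot product with a fixed vector, as a linear map. -/
def dotL {n : ℕ} (d : Fin n → ℝ) : (Fin n → ℝ) →ₗ[ℝ] ℝ where
  toFun v := v ⬝ᵥ d
  map_add' a b := by simp [add_dotProduct]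
  map_smul' c a := by simp [smul_dotProduct]

open Matrix in
@[simp] lemma dotL_apply {n : ℕ} (d v : Fin n → ℝ) : dotL d v = v ⬝ᵥ d := rfl

open Matrix in
lemma exists_inj_functional {n : ℕ} (s : Finset (Fin n → ℝ)) :
    ∃ v : Fin n → ℝ, Set.InjOn (fun x => v ⬝ᵥ x) ↑s := by
  classical
  set P : Finset ((Fin n → ℝ) × (Fin n → ℝ)) := (s ×ˢ s).filter fun p => p.1 ≠ p.2 with hP
  let Kf : P → Subspace ℝ (Fin n → ℝ) := fun p => LinearMap.ker (dotL (p.1.1 - p.1.2))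
  have hK : ∀ p : P, Kf p ≠ ⊤ := by
    rintro ⟨⟨x, y⟩, hp⟩ htop
    simp only [hP, Finset.mem_filter, Finset.mem_product] at hp
    have hxy : x - y ≠ 0 := sub_ne_zero.mpr hp.2
    obtain ⟨i, hi⟩ := Function.ne_iff.mp hxy
    have : (Pi.single i (1:ℝ)) ∈ Kf ⟨⟨x, y⟩, by simpa [hP, Finset.mem_filter] using hp⟩ := by
      rw [htop]; trivial
    simp only [Kf, LinearMap.mem_ker, dotL_apply] at this
    rw [single_dotProduct, one_mul] at this
    exact hi (by simpa [sub_eq_zero] using this)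
  have hne : ⋃ p : P, (Kf p : Set (Fin n → ℝ)) ≠ Set.univ := by
    intro h
    obtain ⟨p, hp⟩ := Subspace.exists_eq_top_of_iUnion_eq_univ h
    exact hK p hp
  obtain ⟨v, hv⟩ := Set.ne_univ_iff_exists_notMem _ |>.mp hne
  refine ⟨v, fun x hx y hy hxy => ?_⟩
  by_contra hne'
  apply hv
  have hpmem : (⟨x, y⟩ : (Fin n → ℝ) × (Fin n → ℝ)) ∈ P := by
    simp only [hP, Finset.mem_filter, Finset.mem_product]
    exact ⟨⟨Finset.mem_coe.mp hx, Finset.mem_coe.mp hy⟩, hne'⟩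
  refine Set.mem_iUnion.mpr ⟨⟨⟨x, y⟩, hpmem⟩, ?_⟩
  simp only [Kf, SetLike.mem_coe, LinearMap.mem_ker, dotL_apply]
  simp only [dotProduct_sub]
  simpa [sub_eq_zero] using hxy

open Matrix in
/-- Interpolation on a finite set using at most `s.card` ReLU units. -/
lemma relu_interp {n : ℕ} (v : Fin n → ℝ) (f : (Fin n → ℝ) → ℝ) :
    ∀ (N : ℕ) (s : Finset (Fin n → ℝ)), s.card ≤ N →
      Set.InjOn (fun x => v ⬝ᵥ x) ↑s →
      ∃ (k : ℕ), k ≤ s.card ∧ ∃ (w : Fin k → Fin n → ℝ) (b α : Fin k → ℝ),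
        ∀ x ∈ s, ∑ j, α j * max 0 (w j ⬝ᵥ x + b j) = f x := by
  intro N
  induction N with
  | zero =>
    intro s hs _
    refine ⟨0, Nat.zero_le _, 0, 0, 0, fun x hx => ?_⟩
    have : s = ∅ := Finset.card_eq_zero.mp (Nat.le_zero.mp hs)
    simp [this] at hx
  | succ N ih =>
    intro s hs hinj
    rcases s.eq_empty_or_nonempty with rfl | hsne
    · exact ⟨0, Nat.zero_le _, 0, 0, 0, fun x hx => by simp at hx⟩
    obtain ⟨x₀, hx₀, hmax⟩ := s.exists_max_image (fun x => v ⬝ᵥ x) hsne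
    set t := s.erase x₀ with ht
    have htsub : t ⊆ s := Finset.erase_subset _ _
    have htcard : t.card = s.card - 1 := Finset.card_erase_of_mem hx₀
    have htN : t.card ≤ N := by
      have := Finset.card_pos.mpr hsne
      omega
    obtain ⟨k, hk, w, b, α, hwba⟩ := ih t htN (hinj.mono (by exact_mod_cast htsub))
    -- all points of t have strictly smaller v-value than x₀
    have hlt : ∀ y ∈ t, v ⬝ᵥ y < v ⬝ᵥ x₀ := by
      intro y hy
      have hy' : y ∈ s := htsub hy
      have hne : y ≠ x₀ := Finset.ne_of_mem_erase hy
      have hle := hmax y hy'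
      rcases lt_or_eq_of_le hle with h | h
      · exact h
      · exact absurd (hinj (by exact_mod_cast hy') (by exact_mod_cast hx₀) h) hne
    -- choose a threshold c
    obtain ⟨c, hc₀, hc⟩ : ∃ c : ℝ, c < v ⬝ᵥ x₀ ∧ ∀ y ∈ t, v ⬝ᵥ y < c := by
      rcases t.eq_empty_or_nonempty with hemp | htne
      · exact ⟨v ⬝ᵥ x₀ - 1, by linarith, fun y hy => by rw [hemp] at hy; simp at hy⟩
      · set M := t.sup' htne (fun y => v ⬝ᵥ y) with hM
        have hMlt : M < v ⬝ᵥ x₀ := (Finset.sup'_lt_iff htne).mpr hlt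
        refine ⟨(M + v ⬝ᵥ x₀) / 2, by linarith, fun y hy => ?_⟩
        have : v ⬝ᵥ y ≤ M := Finset.le_sup' _ hy
        linarith
    set g₀ : ℝ := v ⬝ᵥ x₀ - c with hg₀
    have hg₀pos : 0 < g₀ := by simp [hg₀]; linarith
    set S₀ : ℝ := ∑ j, α j * max 0 (w j ⬝ᵥ x₀ + b j) with hS₀
    set A : ℝ := (f x₀ - S₀) / g₀ with hA
    refine ⟨k + 1, ?_, Fin.cons v w, Fin.cons (-c) b, Fin.cons A α, ?_⟩
    · have := Finset.card_pos.mpr hsne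
      omega
    intro x hx
    rw [Fin.sum_univ_succ]
    simp only [Fin.cons_zero, Fin.cons_succ]
    by_cases hxx : x = x₀
    · rw [hxx]
      have h1 : max 0 (v ⬝ᵥ x₀ + -c) = g₀ := by
        rw [max_eq_right (by linarith)]
        rw [hg₀]; ring
      rw [h1]
      have h2 : ∑ j : Fin k, α j * max 0 (w j ⬝ᵥ x₀ + b j) = S₀ := rfl
      rw [h2, hA]
      field_simp
      ring
    · have hxt : x ∈ t := Finset.mem_erase.mpr ⟨hxx, hx⟩
      have h1 : max 0 (v ⬝ᵥ x + -c) = 0 := by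
        rw [max_eq_left]
        have := hc x hxt
        linarith
      rw [h1, mul_zero, zero_add]
      exact hwba x hxt

open Matrix in
/-- A three-layer ReLU network with `m ≥ ν(n+1)` hidden units can
interpolate any function on a finite set `D ⊆ ℝⁿ` of cardinality `ν` (in particular
any discrete piecewise linear function). -/
theorem stmt_9 (n ν : ℕ) (D : Set (Fin n → ℝ)) (hfin : D.Finite) (hcard : D.ncard = ν)
    (f : (Fin n → ℝ) → ℝ) (m : ℕ) (hm : ν * (n + 1) ≤ m) :
    ∃ (w : Fin m → Fin n → ℝ) (b α : Fin m → ℝ),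
      ∀ x ∈ D, ∑ j, α j * max 0 (w j ⬝ᵥ x + b j) = f x := by
  classical
  set s : Finset (Fin n → ℝ) := hfin.toFinset with hsdef
  have hDs : D = ↑s := by simp [hsdef]
  have hscard : s.card = ν := by
    rw [← hcard, Set.ncard_eq_toFinset_card D hfin]
  obtain ⟨v, hv⟩ := exists_inj_functional s
  obtain ⟨k, hk, w, b, α, hwba⟩ := relu_interp v f s.card s le_rfl hv
  have hkm : k ≤ m := by
    have h1 : ν ≤ ν * (n + 1) := Nat.le_mul_of_pos_right ν (Nat.succ_pos n)
    omega
  refine ⟨fun j => if h : (j : ℕ) < k then w ⟨j, h⟩ else 0,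
          fun j => if h : (j : ℕ) < k then b ⟨j, h⟩ else 0,
          fun j => if h : (j : ℕ) < k then α ⟨j, h⟩ else 0, ?_⟩
  intro x hx
  have hxs : x ∈ s := by rw [hDs] at hx; exact_mod_cast hx
  rw [Fin.sum_univ_eq_sum_range
    (fun j => (if h : j < k then α ⟨j, h⟩ else 0) *
      max 0 ((if h : j < k then w ⟨j, h⟩ else 0) ⬝ᵥ x + (if h : j < k then b ⟨j, h⟩ else 0)))]
  rw [← Finset.sum_subset (Finset.range_subset_range.mpr hkm)
    (by intro i _ hi; rw [Finset.mem_range] at hi; push_neg at hi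
        rw [dif_neg (by omega), zero_mul])]
  rw [← hwba x hxs, ← Fin.sum_univ_eq_sum_range]
  apply Finset.sum_congr rfl
  intro j _
  rw [dif_pos j.isLt, dif_pos j.isLt, dif_pos j.isLt]
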